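/- Let G be a simple connected vertex-transitive graph of odd order with vertex degree k ≥ 4 and girth greater than 3. Then for every vertex subset S with |S| ≥ 2 and |V(G) \ S| ≥ 2, the number d(S) of edges with exactly one end in S satisfies d(S) ≥ 2k − 2. -/
import Mathlib


open SimpleGraph

/-- The set of edges of `G` with exactly one end in `S`. -/
def edgeBoundary {V : Type*} (G : SimpleGraph V) (S : Set V) : Set (Sym2 V) :=
  {e | e ∈ G.edgeSet ∧ ∃ x ∈ S, ∃ y ∉ S, e = s(x, y)}

section Aux

open Finset

set_option linter.unusedSectionVars false

private lemma myTriangleFree {V : Type*} (G : SimpleGraph V) (hgirth : 3 < G.girth)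
    {x y z : V} (hxy : G.Adj x y) (hyz : G.Adj y z) (hxz : G.Adj x z) : False := by
  set w := Walk.cons hxy (Walk.cons hyz (Walk.cons hxz.symm Walk.nil)) with hwdef
  have hw : w.IsCycle := by
    simp [hwdef, Walk.isCycle_def, Walk.isTrail_def, hxy.ne, hyz.ne, hxz.ne, hxy.ne', hyz.ne',
      hxz.ne']
  have h1 : G.egirth ≤ (w.length : ℕ∞) := iInf_le_of_le x (iInf_le_of_le w (iInf_le _ hw))
  have h2 : G.egirth ≤ (3 : ℕ∞) := by simpa [hwdef] using h1
  have h3 : G.girth ≤ 3 := by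
    have := ENat.toNat_le_toNat h2 (by simp : (3:ℕ∞) ≠ ⊤)
    simpa [SimpleGraph.girth] using this
  omega

variable {V : Type*} [Fintype V] [DecidableEq V] (G : SimpleGraph V) [DecidableRel G.Adj]

private def cutC (S : Finset V) : ℕ := ((S ×ˢ Sᶜ).filter fun p => G.Adj p.1 p.2).card

private lemma cutC_eq_sum (S : Finset V) :
    cutC G S = ∑ x ∈ S, (Sᶜ.filter (G.Adj x)).card := by
  classical
  rw [cutC, Finset.card_filter, Finset.sum_product]
  congr 1; ext x
  rw [Finset.card_filter]

private lemma cutC_eq_filter_univ (S : Finset V) :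
    cutC G S = ((univ ×ˢ univ : Finset (V × V)).filter
      fun p => p.1 ∈ S ∧ p.2 ∉ S ∧ G.Adj p.1 p.2).card := by
  rw [cutC]; congr 1
  ext p
  simp only [mem_filter, mem_product, mem_compl, mem_univ, true_and]
  tauto

private lemma cutC_eq_sum_pairs (S : Finset V) :
    cutC G S = ∑ p ∈ (univ ×ˢ univ : Finset (V × V)),
      (if p.1 ∈ S ∧ p.2 ∉ S ∧ G.Adj p.1 p.2 then 1 else 0) := by
  rw [cutC_eq_filter_univ, Finset.card_filter]

private lemma cutC_submod (A B : Finset V) :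
    cutC G (A ∩ B) + cutC G (A ∪ B) ≤ cutC G A + cutC G B := by
  classical
  simp only [cutC_eq_sum_pairs, ← Finset.sum_add_distrib]
  apply Finset.sum_le_sum
  intro p _
  by_cases h1 : p.1 ∈ A <;> by_cases h2 : p.1 ∈ B <;> by_cases h3 : p.2 ∈ A <;>
    by_cases h4 : p.2 ∈ B <;> by_cases h5 : G.Adj p.1 p.2 <;> simp_all

private lemma cutC_compl (S : Finset V) : cutC G Sᶜ = cutC G S := by
  classical
  rw [cutC, cutC]
  apply Finset.card_nbij' (fun p => p.swap) (fun p => p.swap)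
  · intro p hp; simp only [mem_coe, mem_filter, mem_product, mem_compl, compl_compl] at hp ⊢
    exact ⟨⟨hp.1.2, hp.1.1⟩, hp.2.symm⟩
  · intro p hp; simp only [mem_coe, mem_filter, mem_product, mem_compl, compl_compl] at hp ⊢
    exact ⟨⟨hp.1.2, hp.1.1⟩, hp.2.symm⟩
  · intro p _; simp
  · intro p _; simp

private lemma cutC_posimod (A B : Finset V) :
    cutC G (A \ B) + cutC G (B \ A) ≤ cutC G A + cutC G B := by
  classical
  have e1 : A \ B = A ∩ Bᶜ := sdiff_eq
  have e2 : B \ A = (A ∪ Bᶜ)ᶜ := by rw [compl_union, compl_compl, sdiff_eq, inter_comm]; rfl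
  calc cutC G (A \ B) + cutC G (B \ A) = cutC G (A ∩ Bᶜ) + cutC G (A ∪ Bᶜ) := by
        rw [e1, e2, cutC_compl]
    _ ≤ cutC G A + cutC G Bᶜ := cutC_submod G A Bᶜ
    _ = cutC G A + cutC G B := by rw [cutC_compl]

private lemma cutC_image (φ : G ≃g G) (S : Finset V) : cutC G (S.image φ) = cutC G S := by
  classical
  rw [cutC, cutC]
  apply Finset.card_nbij' (fun p => (φ.symm p.1, φ.symm p.2)) (fun p => (φ p.1, φ p.2))
  · intro p hp
    simp only [mem_coe, mem_filter, mem_product, mem_compl, mem_image] at hp ⊢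
    obtain ⟨⟨⟨a, ha, hap⟩, h2⟩, hadj⟩ := hp
    refine ⟨⟨by simpa [← hap] using ha, fun h => h2 ⟨_, h, by simp⟩⟩, ?_⟩
    simpa using φ.symm.map_adj_iff.mpr hadj
  · intro p hp
    simp only [mem_coe, mem_filter, mem_product, mem_compl, mem_image] at hp ⊢
    obtain ⟨⟨h1, h2⟩, hadj⟩ := hp
    refine ⟨⟨⟨p.1, h1, rfl⟩, fun ⟨a, ha, hap⟩ => h2 ?_⟩, ?_⟩
    · have : a = p.2 := φ.injective hap
      rwa [← this]
    · exact φ.map_adj_iff.mpr hadj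
  · intro p _; simp
  · intro p _; simp

private lemma indeg_image (φ : G ≃g G) (A : Finset V) (x : V) :
    ((A.image φ).filter (G.Adj (φ x))).card = (A.filter (G.Adj x)).card := by
  classical
  have himg : (A.filter (G.Adj x)).image φ = (A.image φ).filter (G.Adj (φ x)) := by
    ext z
    simp only [mem_image, mem_filter]
    constructor
    · rintro ⟨w, ⟨hw, hadj⟩, rfl⟩
      exact ⟨⟨w, hw, rfl⟩, φ.map_adj_iff.mpr hadj⟩
    · rintro ⟨⟨w, hw, rfl⟩, hadj⟩
      exact ⟨w, ⟨hw, φ.map_adj_iff.mp hadj⟩, rfl⟩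
  rw [← himg, Finset.card_image_of_injective _ φ.injective]

private lemma deg_eq (k : ℕ) (hreg : ∀ v : V, (G.neighborSet v).ncard = k) (x : V) :
    (univ.filter (G.Adj x)).card = k := by
  have := hreg x
  rw [← Set.ncard_coe_finset]
  convert this using 2
  ext y; simp

private lemma outdeg_eq (k : ℕ) (hreg : ∀ v : V, (G.neighborSet v).ncard = k) (S : Finset V)
    (x : V) : (Sᶜ.filter (G.Adj x)).card = k - (S.filter (G.Adj x)).card := by
  have h : (S.filter (G.Adj x)).card + (Sᶜ.filter (G.Adj x)).card = k := by
    rw [← deg_eq G k hreg x, ← Finset.card_union_of_disjoint]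
    · congr 1; ext y; simp only [mem_union, mem_filter, mem_compl, mem_univ, true_and]; tauto
    · exact Finset.disjoint_filter_filter (disjoint_compl_right)
  omega

private lemma exists_crossing {S : Finset V} (hconn : G.Connected) (h1 : S.Nonempty)
    (h2 : Sᶜ.Nonempty) : 0 < cutC G S := by
  classical
  obtain ⟨x, hx⟩ := h1
  obtain ⟨y, hy⟩ := h2
  rw [mem_compl] at hy
  have key : ∀ {a b : V}, G.Walk a b → a ∈ S → b ∉ S →
      ∃ u v, u ∈ S ∧ v ∉ S ∧ G.Adj u v := by
    intro a b w
    induction w with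
    | nil => intro h1 h2; exact absurd h1 h2
    | cons h p ih =>
      rename_i u v c
      intro hu hc
      by_cases hv : v ∈ S
      · exact ih hv hc
      · exact ⟨u, v, hu, hv, h⟩
  obtain ⟨u, v, hu, hv, hadj⟩ := key ((hconn x y).some) hx hy
  rw [cutC, Finset.card_pos]
  exact ⟨(u, v), by simp [mem_filter, mem_product, hu, hv, hadj]⟩

private lemma edgeBoundary_ncard (S : Set V) [DecidablePred (· ∈ S)] :
    (edgeBoundary G S).ncard = cutC G S.toFinset := by
  classical
  have himg : edgeBoundary G S =
      (fun p : V × V => s(p.1, p.2)) '' ((S.toFinset ×ˢ S.toFinsetᶜ).filter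
        fun p => G.Adj p.1 p.2 : Finset (V × V)) := by
    ext e
    simp only [edgeBoundary, Set.mem_setOf_eq, Set.mem_image, mem_coe, mem_filter, mem_product,
      mem_compl, Set.mem_toFinset]
    constructor
    · rintro ⟨he, x, hx, y, hy, rfl⟩
      exact ⟨(x, y), ⟨⟨hx, hy⟩, he⟩, rfl⟩
    · rintro ⟨⟨x, y⟩, ⟨⟨hx, hy⟩, hadj⟩, rfl⟩
      exact ⟨hadj, x, hx, y, hy, rfl⟩
  rw [himg, Set.ncard_image_of_injOn, cutC, Set.ncard_coe_finset]
  rintro ⟨x, y⟩ hxy ⟨x', y'⟩ hxy' heq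
  simp only [mem_coe, mem_filter, mem_product, mem_compl, Set.mem_toFinset] at hxy hxy'
  rw [Sym2.eq_iff] at heq
  rcases heq with ⟨rfl, rfl⟩ | ⟨rfl, rfl⟩
  · rfl
  · exact (hxy'.1.2 hxy.1.1).elim

end Aux

/-- In a connected vertex-transitive odd graph with degree `k ≥ 4` and girth greater than 3,
every vertex subset `S` with `|S| ≥ 2` and `|V \ S| ≥ 2` satisfies `d(S) ≥ 2k - 2`. -/
theorem edge_boundary_lower_bound {V : Type*} [Fintype V] (G : SimpleGraph V) (k : ℕ)
    (hconn : G.Connected)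
    (hvt : ∀ x y : V, ∃ φ : G ≃g G, φ x = y)
    (hodd : Odd (Fintype.card V))
    (hreg : ∀ v : V, (G.neighborSet v).ncard = k)
    (hk : 4 ≤ k)
    (hgirth : 3 < G.girth) :
    ∀ S : Set V, 2 ≤ S.ncard → 2 ≤ Sᶜ.ncard →
      2 * k - 2 ≤ (edgeBoundary G S).ncard := by
  classical
  intro S hS2 hSc2
  by_contra hlt
  push_neg at hlt
  set n := Fintype.card V with hn
  -- transfer to Finset world
  set S₀ : Finset V := S.toFinset with hS₀def
  have hS₀card : 2 ≤ S₀.card := by rwa [Set.ncard_eq_toFinset_card'] at hS2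
  have hS₀ccard : 2 ≤ S₀ᶜ.card := by
    rw [Set.ncard_eq_toFinset_card'] at hSc2
    rwa [← Set.toFinset_compl]
  have hS₀cut : cutC G S₀ ≤ 2 * k - 3 := by
    rw [hS₀def]
    have heb := edgeBoundary_ncard G S
    omega
  -- feasibility predicate
  set Feas : Finset V → Prop := fun T => 2 ≤ T.card ∧ 2 ≤ Tᶜ.card with hFeas
  -- choose minimum cut value m
  obtain ⟨M, hM, hMmin⟩ := (Finset.univ.filter Feas).exists_min_image (cutC G)
    ⟨S₀, by simp [hFeas, hS₀card, hS₀ccard]⟩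
  set m := cutC G M with hmdef
  have hm_le : m ≤ 2 * k - 3 := le_trans (hMmin S₀ (by simp [hFeas, hS₀card, hS₀ccard])) hS₀cut
  have hm_min : ∀ T : Finset V, Feas T → m ≤ cutC G T := by
    intro T hT
    exact hMmin T (Finset.mem_filter.mpr ⟨Finset.mem_univ T, hT⟩)
  -- choose atom: minimum-size minimizer
  obtain ⟨A, hA, hAmin⟩ := ((Finset.univ.filter Feas).filter
      fun T => cutC G T = m).exists_min_image Finset.card
    ⟨M, Finset.mem_filter.mpr ⟨hM, rfl⟩⟩
  simp only [Finset.mem_filter, Finset.mem_univ, true_and] at hA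
  obtain ⟨⟨hAcard, hAccard⟩, hAm⟩ := hA
  have hacard : ∀ T : Finset V, Feas T → cutC G T = m → A.card ≤ T.card := by
    intro T hT hTm
    exact hAmin T (by simp only [Finset.mem_filter, Finset.mem_univ, true_and]; exact ⟨hT, hTm⟩)
  set a := A.card with hadef
  have hnsplit : A.card + Aᶜ.card = n := by
    rw [Finset.card_add_card_compl]
  -- complement is also a minimizer, so 2a ≤ n, and n odd gives 2a < n
  have hcomplFeas : Feas Aᶜ := ⟨hAccard, by rwa [compl_compl]⟩
  have hcomplm : cutC G Aᶜ = m := by rw [cutC_compl, hAm]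
  have h2a : 2 * a ≤ n := by
    have := hacard Aᶜ hcomplFeas hcomplm
    omega
  obtain ⟨t, ht⟩ := hodd
  have h2a' : 2 * a + 1 ≤ n := by omega
  -- indegree
  set indeg : V → ℕ := fun x => (A.filter (G.Adj x)).card with hindeg
  have hcutA : cutC G A = ∑ x ∈ A, (k - indeg x) := by
    rw [cutC_eq_sum]
    exact Finset.sum_congr rfl fun x _ => outdeg_eq G k hreg A x
  have hindeg_le : ∀ x, indeg x ≤ k := by
    intro x
    rw [hindeg, ← deg_eq G k hreg x]
    exact Finset.card_le_card (Finset.filter_subset_filter _ (Finset.subset_univ A))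
  have hindeg_lt_a : ∀ x ∈ A, indeg x ≤ a - 1 := by
    intro x hx
    have : A.filter (G.Adj x) ⊆ A.erase x := by
      intro z hz
      simp only [Finset.mem_filter] at hz
      exact Finset.mem_erase.mpr ⟨hz.2.ne', hz.1⟩
    calc indeg x ≤ (A.erase x).card := Finset.card_le_card this
      _ = a - 1 := by rw [Finset.card_erase_of_mem hx]
  -- a ≥ 3
  have ha3 : 3 ≤ a := by
    by_contra h
    have ha2 : a = 2 := by omega
    have hsum : ∑ x ∈ A, (k - 1) ≤ ∑ x ∈ A, (k - indeg x) := by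
      apply Finset.sum_le_sum
      intro x hx
      have := hindeg_lt_a x hx
      omega
    rw [Finset.sum_const, smul_eq_mul, ← hadef, ha2] at hsum
    have : 2 * k - 2 ≤ cutC G A := by
      rw [hcutA]
      calc 2 * k - 2 = 2 * (k - 1) := by omega
        _ ≤ ∑ x ∈ A, (k - indeg x) := hsum
    omega
  -- atom uniqueness: any same-size minimizer meeting A equals A
  have hatom : ∀ B : Finset V, Feas B → cutC G B = m → B.card = a → (A ∩ B).Nonempty →
      A = B := by
    intro B hBFeas hBm hBcard hABne
    by_contra hne
    have hABsub : (A ∩ B).card ≤ a - 1 := by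
      have hsub : A ∩ B ⊆ A := Finset.inter_subset_left
      have hlt : A ∩ B ≠ A := by
        intro h
        have : A ⊆ B := by rw [← h]; exact Finset.inter_subset_right
        exact hne (Finset.eq_of_subset_of_card_le this (by omega))
      have := Finset.card_le_card hsub
      have hne2 : (A ∩ B).card ≠ a := fun h =>
        hlt (Finset.eq_of_subset_of_card_le hsub (by omega))
      omega
    have hAB1 : 1 ≤ (A ∩ B).card := Finset.card_pos.mpr hABne
    have hunion : (A ∪ B).card + (A ∩ B).card = a + a := by
      rw [Finset.card_union_add_card_inter, hBcard]
    have hUc : (A ∪ B)ᶜ.card = n - (A ∪ B).card := by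
      have := Finset.card_add_card_compl (A ∪ B)
      omega
    have hUcard2 : 2 ≤ (A ∪ B)ᶜ.card := by omega
    by_cases hI2 : 2 ≤ (A ∩ B).card
    · -- submodular case
      have hIFeas : Feas (A ∩ B) := by
        refine ⟨hI2, ?_⟩
        calc 2 ≤ Aᶜ.card := hAccard
          _ ≤ (A ∩ B)ᶜ.card := Finset.card_le_card (compl_le_compl Finset.inter_subset_left)
      have hUFeas : Feas (A ∪ B) := by
        refine ⟨?_, hUcard2⟩
        calc 2 ≤ A.card := hAcard
          _ ≤ (A ∪ B).card := Finset.card_le_card Finset.subset_union_left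
      have h1 := hm_min _ hIFeas
      have h2 := hm_min _ hUFeas
      have h3 := cutC_submod G A B
      rw [hAm, hBm] at h3
      have hIm : cutC G (A ∩ B) = m := by omega
      have := hacard _ hIFeas hIm
      omega
    · -- |A ∩ B| = 1, posimodular case
      have hI1 : (A ∩ B).card = 1 := by omega
      have hsd1 : (A \ B).card = a - 1 := by
        have := Finset.card_inter_add_card_sdiff A B
        omega
      have hsd2 : (B \ A).card = a - 1 := by
        have := Finset.card_inter_add_card_sdiff B A
        rw [Finset.inter_comm] at this
        omega
      have hsdFeas1 : Feas (A \ B) := by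
        refine ⟨by omega, ?_⟩
        calc 2 ≤ B.card := hBFeas.1
          _ ≤ (A \ B)ᶜ.card := Finset.card_le_card fun x hx => by
            simp only [Finset.mem_compl, Finset.mem_sdiff]; intro h; exact h.2 hx
      have hsdFeas2 : Feas (B \ A) := by
        refine ⟨by omega, ?_⟩
        calc 2 ≤ A.card := hAcard
          _ ≤ (B \ A)ᶜ.card := Finset.card_le_card fun x hx => by
            simp only [Finset.mem_compl, Finset.mem_sdiff]; intro h; exact h.2 hx
      have h1 := hm_min _ hsdFeas1
      have h2 := hm_min _ hsdFeas2
      have h3 := cutC_posimod G A B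
      rw [hAm, hBm] at h3
      have hsm : cutC G (A \ B) = m := by omega
      have := hacard _ hsdFeas1 hsm
      omega
  -- regularity of the atom
  obtain ⟨x₀, hx₀⟩ : A.Nonempty := Finset.card_pos.mp (by omega)
  set r := indeg x₀ with hrdef
  have hregA : ∀ x ∈ A, indeg x = r := by
    intro x hx
    obtain ⟨φ, hφ⟩ := hvt x₀ x
    have hBm : cutC G (A.image φ) = m := by rw [cutC_image, hAm]
    have hBcard : (A.image φ).card = a := by
      rw [Finset.card_image_of_injective _ φ.injective]
    have hBFeas : Feas (A.image φ) := by
      refine ⟨by omega, ?_⟩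
      have := Finset.card_add_card_compl (A.image φ)
      omega
    have hint : (A ∩ A.image φ).Nonempty := by
      refine ⟨x, Finset.mem_inter.mpr ⟨hx, ?_⟩⟩
      exact Finset.mem_image.mpr ⟨x₀, hx₀, hφ⟩
    have hAeq : A = A.image φ := hatom _ hBFeas hBm hBcard hint
    calc indeg x = ((A.image φ).filter (G.Adj (φ x₀))).card := by
          rw [← hAeq, hindeg, hφ]
      _ = (A.filter (G.Adj x₀)).card := indeg_image G φ A x₀
      _ = r := rfl
  have hcutA' : m = a * (k - r) := by
    rw [← hAm, hcutA]
    rw [Finset.sum_congr rfl fun x hx => by rw [hregA x hx]]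
    rw [Finset.sum_const, smul_eq_mul]
  -- m > 0
  have hmpos : 0 < m := by
    rw [← hAm]
    exact exists_crossing G hconn (Finset.card_pos.mp (by omega))
      (Finset.card_pos.mp (by omega))
  have hrk : r < k := by
    by_contra h
    push_neg at h
    have : k - r = 0 := by omega
    rw [hcutA', this, mul_zero] at hmpos
    omega
  -- case r = 0
  by_cases hr0 : r = 0
  · have hm0 : a * k ≤ 2 * k - 3 := by
      rw [hcutA', hr0, Nat.sub_zero] at hm_le
      exact hm_le
    have h3k : 3 * k ≤ a * k := Nat.mul_le_mul_right k (by omega)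
    have := le_trans h3k hm0
    omega
  -- case r ≥ 1 : use triangle-freeness
  · have hr1 : 1 ≤ r := by omega
    obtain ⟨y, hy⟩ : (A.filter (G.Adj x₀)).Nonempty := by
      rw [← Finset.card_pos]
      have : (A.filter (G.Adj x₀)).card = r := rfl
      omega
    rw [Finset.mem_filter] at hy
    obtain ⟨hyA, hxy⟩ := hy
    have hdisj : Disjoint (A.filter (G.Adj x₀)) (A.filter (G.Adj y)) := by
      rw [Finset.disjoint_left]
      intro z hz1 hz2
      rw [Finset.mem_filter] at hz1 hz2
      exact myTriangleFree G hgirth hxy hz2.2 hz1.2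
    have h2r : 2 * r ≤ a := by
      have hsub : A.filter (G.Adj x₀) ∪ A.filter (G.Adj y) ⊆ A :=
        Finset.union_subset (Finset.filter_subset _ _) (Finset.filter_subset _ _)
      have := Finset.card_le_card hsub
      rw [Finset.card_union_of_disjoint hdisj] at this
      have e1 : (A.filter (G.Adj x₀)).card = r := rfl
      have e2 : (A.filter (G.Adj y)).card = r := hregA y hyA
      omega
    -- arithmetic: m = a(k-r) ≥ 2r(k-r) ≥ 2(k-1) > 2k-3 ≥ m
    set d := k - r with hddef
    have hd1 : 1 ≤ d := by omega
    have hkd : k = r + d := by omega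
    have c1 : 2 * r * d ≤ a * d := Nat.mul_le_mul_right d h2r
    have c2 : r + d - 1 ≤ r * d := by
      obtain ⟨r', hr'⟩ := Nat.exists_eq_add_of_le hr1
      obtain ⟨d', hd'⟩ := Nat.exists_eq_add_of_le hd1
      rw [hr', hd']
      calc 1 + r' + (1 + d') - 1 = 1 + r' + d' := by omega
        _ ≤ 1 + r' + d' + r' * d' := Nat.le_add_right _ _
        _ = (1 + r') * (1 + d') := by ring
    have c3 : 2 * (r * d) ≤ m := by
      rw [hcutA']
      calc 2 * (r * d) = 2 * r * d := by ring
        _ ≤ a * d := c1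
    have c4 : 2 * (r + d - 1) ≤ m :=
      le_trans (Nat.mul_le_mul_left 2 c2) c3
    omega
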